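/- Let H be a reduced double-well type potential, β > 0, and let Φ_β, λ_β be the eigenfunction and eigenvalue of the transfer operator L_β as above. Then 1 < λ_β ≤ 2, Φ_β is constant on each cylinder [0^n 1] and [1^n 0] (n ≥ 1), and: (1) Φ_β|[0^n 1] = ( Σ_{k≥n} λ_β^{−(k−n+1)} e^{−β H_k^1} ) · Φ_β|[10] and Φ_β(0^∞) = e^{−β H_∞^1} (λ_β − 1)^{−1} Φ_β|[10]; (2) Φ_β|[1^n 0] = ( Σ_{k≥n} λ_β^{−(k−n+1)} e^{−β H_k^0} ) · Φ_β|[01] and Φ_β(1^∞) = e^{−β H_∞^0} (λ_β − 1)^{−1} Φ_β|[01]; (3) if H_∞^0 = H_∞^1 = 0, then max{Φ_β(0^∞), Φ_β(1^∞)} = 1. -/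

import Mathlib

open MeasureTheory Filter Topology

/-- The one-sided full shift space on two symbols. -/
abbrev Sig : Type := ℕ → Fin 2

/-- The left shift map. -/
def shft : Sig → Sig := fun x n => x (n + 1)

/-- Concatenation of a symbol with a configuration. -/
def cons2 (i : Fin 2) (x : Sig) : Sig := fun n => match n with
  | 0 => i
  | Nat.succ k => x k

/-- `x` and `y` agree on their first `n` coordinates. -/
def nClose (n : ℕ) (x y : Sig) : Prop := ∀ k, k < n → x k = y k

/-- The `n`-th variation of `H`. -/
noncomputable def Var (H : Sig → ℝ) (n : ℕ) : ℝ :=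
  sSup {d : ℝ | ∃ x y : Sig, nClose n x y ∧ d = |H x - H y|}

/-- `H` has summable variation. -/
def SummableVar (H : Sig → ℝ) : Prop := Summable (fun n : ℕ => Var H (n + 1))

/-- The transfer operator at inverse temperature `β`. -/
noncomputable def transfer (β : ℝ) (H : Sig → ℝ) (Φ : Sig → ℝ) : Sig → ℝ :=
  fun x => Real.exp (-β * H (cons2 0 x)) * Φ (cons2 0 x)
         + Real.exp (-β * H (cons2 1 x)) * Φ (cons2 1 x)

/-- The cylinder set determined by a finite word. -/
def cyl (w : List (Fin 2)) : Set Sig := {x | ∀ i : ℕ, ∀ h : i < w.length, x i = w.get ⟨i, h⟩}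

/-- The fixed point `0^∞`. -/
def zpt : Sig := fun _ => 0

/-- The fixed point `1^∞`. -/
def opt : Sig := fun _ => 1

/-- The minimizing ergodic value of `H`. -/
noncomputable def Hbar (H : Sig → ℝ) : ℝ :=
  sInf {r : ℝ | ∃ μ : Measure Sig, IsProbabilityMeasure μ ∧ μ.map shft = μ ∧ r = ∫ x, H x ∂μ}

/-- A minimizing measure for `H`. -/
def IsMinimizing (H : Sig → ℝ) (μ : Measure Sig) : Prop :=
  IsProbabilityMeasure μ ∧ μ.map shft = μ ∧
  ∀ ν : Measure Sig, IsProbabilityMeasure ν → ν.map shft = ν →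
    ∫ x, H x ∂μ ≤ ∫ x, H x ∂ν

/-- The (topological) support of a measure. -/
def mSupport (μ : Measure Sig) : Set Sig := {x | ∀ U : Set Sig, IsOpen U → x ∈ U → μ U ≠ 0}

/-- The Mather set of `H` : union of supports of minimizing measures. -/
def mather (H : Sig → ℝ) : Set Sig := {x | ∃ μ : Measure Sig, IsMinimizing H μ ∧ x ∈ mSupport μ}

/-- Birkhoff sum of the normalized potential. -/
noncomputable def birk (H : Sig → ℝ) (k : ℕ) (z : Sig) : ℝ :=
  ∑ i ∈ Finset.range k, (H (shft^[i] z) - Hbar H)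

/-- The quantity `S_n^p(x,y)` (an infimum in `EReal`, `+∞` when the defining set is empty). -/
noncomputable def SBar (H : Sig → ℝ) (p n : ℕ) (x y : Sig) : EReal :=
  sInf {s : EReal | ∃ k : ℕ, n ≤ k ∧ ∃ z : Sig, nClose p z x ∧ nClose p (shft^[k] z) y ∧
    s = (birk H k z : EReal)}

/-- The Peierls barrier `h(x,y)`; since `S_n^p(x,y)` is nondecreasing in both `n` and `p`,
the double limit is a double supremum. -/
noncomputable def peierls (H : Sig → ℝ) (x y : Sig) : EReal := ⨆ p : ℕ, ⨆ n : ℕ, SBar H p n x y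

/-- The Lax-Oleinik operator (the two preimages of `y` under the shift are `0y` and `1y`). -/
noncomputable def laxOleinik (H V : Sig → ℝ) : Sig → ℝ :=
  fun y => min (V (cons2 0 y) + H (cons2 0 y)) (V (cons2 1 y) + H (cons2 1 y))

/-- A calibrated sub-action of `H`. -/
def IsCalibrated (H V : Sig → ℝ) : Prop :=
  Continuous V ∧ laxOleinik H V = fun y => V y + Hbar H

/-- Membership in the class `𝕂`. -/
def InK (H V : Sig → ℝ) : Prop :=
  Continuous V ∧ ∀ n : ℕ, 1 ≤ n → Var V n ≤ ∑' k : ℕ, Var H (n + 1 + k)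

/-- A reduced double-well type potential with data `(H_n^0)`, `(H_n^1)` (indexed from `n = 1`). -/
structure ReducedDW (H : Sig → ℝ) (H0 H1 : ℕ → ℝ) : Prop where
  cont : Continuous H
  nonneg : ∀ x, 0 ≤ H x
  svar : SummableVar H
  zero : ∀ x ∈ cyl [0, 0] ∪ cyl [1, 1], H x = 0
  pos0 : ∀ n, 1 ≤ n → 0 < H0 n
  pos1 : ∀ n, 1 ≤ n → 0 < H1 n
  val0 : ∀ n, 1 ≤ n → ∀ x ∈ cyl (0 :: (List.replicate n 1 ++ [0])), H x = H0 n
  val1 : ∀ n, 1 ≤ n → ∀ x ∈ cyl (1 :: (List.replicate n 0 ++ [1])), H x = H1 n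
  bdd0 : ∀ k : ℕ, BddAbove (Set.range fun n : ℕ => |H0 (k + 1) - H0 (k + 1 + n)|)
  bdd1 : ∀ k : ℕ, BddAbove (Set.range fun n : ℕ => |H1 (k + 1) - H1 (k + 1 + n)|)
  sum0 : Summable (fun k : ℕ => ⨆ n : ℕ, |H0 (k + 1) - H0 (k + 1 + n)|)
  sum1 : Summable (fun k : ℕ => ⨆ n : ℕ, |H1 (k + 1) - H1 (k + 1 + n)|)

/-- A double-well type potential with data `a_n^0, a_n^1, b_n^0, b_n^1` (indexed from `n = 1`). -/
structure DW (H : Sig → ℝ) (a0 a1 b0 b1 : ℕ → ℝ) : Prop where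
  cont : Continuous H
  nonneg : ∀ x, 0 ≤ H x
  svar : SummableVar H
  anneg0 : ∀ n, 1 ≤ n → 0 ≤ a0 n
  anneg1 : ∀ n, 1 ≤ n → 0 ≤ a1 n
  bpos0 : ∀ n, 1 ≤ n → 0 < b0 n
  bpos1 : ∀ n, 1 ≤ n → 0 < b1 n
  vala0 : ∀ n, 1 ≤ n → ∀ x ∈ cyl (0 :: (List.replicate n 0 ++ [1])), H x = a0 n
  vala1 : ∀ n, 1 ≤ n → ∀ x ∈ cyl (1 :: (List.replicate n 1 ++ [0])), H x = a1 n
  valb0 : ∀ n, 1 ≤ n → ∀ x ∈ cyl (0 :: (List.replicate n 1 ++ [0])), H x = b0 n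
  valb1 : ∀ n, 1 ≤ n → ∀ x ∈ cyl (1 :: (List.replicate n 0 ++ [1])), H x = b1 n
  suma0 : Summable (fun n : ℕ => ((n + 1 : ℕ) : ℝ) * a0 (n + 1))
  suma1 : Summable (fun n : ℕ => ((n + 1 : ℕ) : ℝ) * a1 (n + 1))
  bddb0 : ∀ k : ℕ, BddAbove (Set.range fun n : ℕ => |b0 (k + 1) - b0 (k + 1 + n)|)
  bddb1 : ∀ k : ℕ, BddAbove (Set.range fun n : ℕ => |b1 (k + 1) - b1 (k + 1 + n)|)
  sumb0 : Summable (fun k : ℕ => ⨆ n : ℕ, |b0 (k + 1) - b0 (k + 1 + n)|)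
  sumb1 : Summable (fun k : ℕ => ⨆ n : ℕ, |b1 (k + 1) - b1 (k + 1 + n)|)

/-- The series `F_β(λ) = Σ_{k≥1} λ^{-k} e^{-β H_k}`. -/
noncomputable def Fser (β : ℝ) (Hs : ℕ → ℝ) (lam : ℝ) : ℝ :=
  ∑' k : ℕ, (lam ^ (k + 1))⁻¹ * Real.exp (-β * Hs (k + 1))

/-- The series `F̃_β(λ) = Σ_{k≥1} k λ^{-k} e^{-β H_k}`. -/
noncomputable def Ftser (β : ℝ) (Hs : ℕ → ℝ) (lam : ℝ) : ℝ :=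
  ∑' k : ℕ, ((k + 1 : ℕ) : ℝ) * (lam ^ (k + 1))⁻¹ * Real.exp (-β * Hs (k + 1))

/-- The data of the Ruelle-Perron-Frobenius solution and Gibbs measure at inverse temperature `β`:
eigenfunction `Φ` (positive, continuous, max 1), eigenvalue `lam`, eigenprobability `ν`,
and the Gibbs measure `μ = Φ ν / ∫ Φ dν`. -/
def GibbsData (H : Sig → ℝ) (β : ℝ) (Φ : Sig → ℝ) (lam : ℝ) (ν μ : Measure Sig) : Prop :=
  Continuous Φ ∧ (∀ x, 0 < Φ x) ∧ IsGreatest (Set.range Φ) 1 ∧ 0 < lam ∧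
  (transfer β H Φ = fun x => lam * Φ x) ∧
  IsProbabilityMeasure ν ∧
  (∀ f : Sig → ℝ, Continuous f → ∫ x, transfer β H f x ∂ν = lam * ∫ x, f x ∂ν) ∧
  μ = (ENNReal.ofReal (∫ x, Φ x ∂ν))⁻¹ • ν.withDensity (fun x => ENNReal.ofReal (Φ x))

-- helpers
@[simp] lemma cons2_zero (i : Fin 2) (x : Sig) : cons2 i x 0 = i := rfl
@[simp] lemma cons2_succ (i : Fin 2) (x : Sig) (k : ℕ) : cons2 i x (k+1) = x k := rfl

def nt (i : Fin 2) : Fin 2 := if i = 0 then 1 else 0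

lemma nt_ne (i : Fin 2) : nt i ≠ i := by fin_cases i <;> simp [nt]

lemma eq_nt_of_ne {v i : Fin 2} (h : v ≠ i) : v = nt i := by
  fin_cases v <;> fin_cases i <;> simp_all [nt]

lemma mem_cyl_cons (a : Fin 2) (w : List (Fin 2)) (x : Sig) :
    x ∈ cyl (a :: w) ↔ x 0 = a ∧ (fun k => x (k+1)) ∈ cyl w := by
  constructor
  · intro h
    refine ⟨h 0 (by simp), fun i hi => ?_⟩
    have := h (i+1) (by simpa using Nat.succ_lt_succ hi)
    simpa using this
  · rintro ⟨h0, h⟩ i hi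
    match i with
    | 0 => simpa using h0
    | Nat.succ k =>
      have hk : k < w.length := by simpa using Nat.lt_of_succ_lt_succ hi
      have := h k hk
      simpa using this

lemma mem_cyl_word (i j : Fin 2) (n : ℕ) (x : Sig) :
    x ∈ cyl (List.replicate n i ++ [j]) ↔ (∀ k, k < n → x k = i) ∧ x n = j := by
  induction n generalizing x with
  | zero =>
    simp only [List.replicate_zero, List.nil_append]
    constructor
    · intro h; exact ⟨by omega, h 0 (by simp)⟩
    · rintro ⟨-, h⟩ k hk
      match k, hk with
      | 0, _ => simpa using h
  | succ n ih =>
    rw [List.replicate_succ, List.cons_append, mem_cyl_cons, ih]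
    constructor
    · rintro ⟨h0, h1, h2⟩
      refine ⟨fun k hk => ?_, h2⟩
      match k with
      | 0 => exact h0
      | Nat.succ m => exact h1 m (by omega)
    · rintro ⟨h1, h2⟩
      exact ⟨h1 0 (by omega), fun k hk => h1 (k+1) (by omega), h2⟩

lemma nClose_mono {m n : ℕ} (h : m ≤ n) {x y : Sig} (hc : nClose n x y) : nClose m x y :=
  fun k hk => hc k (lt_of_lt_of_le hk h)

lemma unifCont (Φ : Sig → ℝ) (hΦc : Continuous Φ) {ε : ℝ} (hε : 0 < ε) :
    ∃ N : ℕ, ∀ x y : Sig, nClose N x y → |Φ x - Φ y| ≤ ε := by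
  -- open neighborhoods
  have hU : ∀ z : Sig, ∃ n : ℕ, ∀ y : Sig, nClose n z y → |Φ y - Φ z| < ε/2 := by
    intro z
    have hopen : IsOpen (Φ ⁻¹' Metric.ball (Φ z) (ε/2)) :=
      Metric.isOpen_ball.preimage hΦc
    have hz : z ∈ Φ ⁻¹' Metric.ball (Φ z) (ε/2) := by
      simp [Metric.mem_ball, hε]
    rw [isOpen_pi_iff] at hopen
    obtain ⟨I, u, hIu, hsub⟩ := hopen z hz
    refine ⟨(I.sup id) + 1, fun y hy => ?_⟩
    have hyU : y ∈ Φ ⁻¹' Metric.ball (Φ z) (ε/2) := by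
      apply hsub
      intro a ha
      have ha' : a ∈ I := ha
      have h1 : a < I.sup id + 1 := by
        have : id a ≤ I.sup id := Finset.le_sup ha'
        simpa using Nat.lt_succ_of_le this
      rw [← hy a h1]
      exact (hIu a ha').2
    simpa [Metric.mem_ball, Real.dist_eq] using hyU
  choose n hn using hU
  -- the cylinder neighborhoods are open
  have hCopen : ∀ z : Sig, IsOpen {y : Sig | nClose (n z) z y} := by
    intro z
    have : {y : Sig | nClose (n z) z y} =
        ⋂ k ∈ Finset.range (n z), (fun y : Sig => y k) ⁻¹' {z k} := by
      ext y
      simp only [Set.mem_setOf_eq, Set.mem_iInter, Set.mem_preimage, Set.mem_singleton_iff,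
        Finset.mem_range, nClose]
      exact ⟨fun h k hk => (h k hk).symm, fun h k hk => (h k hk).symm⟩
    rw [this]
    exact isOpen_biInter_finset fun k _ =>
      (continuous_apply k).isOpen_preimage _ (isOpen_discrete _)
  obtain ⟨t, ht⟩ := isCompact_univ.elim_finite_subcover
    (fun z : Sig => {y : Sig | nClose (n z) z y}) hCopen
    (fun x _ => Set.mem_iUnion.2 ⟨x, fun k _ => rfl⟩)
  refine ⟨t.sup n, fun x y hxy => ?_⟩
  obtain ⟨z, hzt, hxz⟩ : ∃ z ∈ t, nClose (n z) z x := by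
    have := ht (Set.mem_univ x)
    simpa using this
  have hzy : nClose (n z) z y := by
    intro k hk
    have hkN : k < t.sup n := lt_of_lt_of_le hk (Finset.le_sup hzt)
    rw [hxz k hk, hxy k hkN]
  have h1 := hn z x hxz
  have h2 := hn z y hzy
  have : |Φ x - Φ y| < ε := by
    have := abs_sub_lt_iff.1 h1
    have := abs_sub_lt_iff.1 h2
    rw [abs_sub_lt_iff]
    constructor <;> linarith [abs_sub_lt_iff.1 h1, abs_sub_lt_iff.1 h2]
  linarith

section VarFacts

lemma var_bddAbove {Φ : Sig → ℝ} (hΦpos : ∀ x, 0 < Φ x) (hΦle : ∀ x, Φ x ≤ 1) (n : ℕ) :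
    BddAbove {d : ℝ | ∃ x y : Sig, nClose n x y ∧ d = |Φ x - Φ y|} := by
  refine ⟨2, ?_⟩
  rintro d ⟨x, y, -, rfl⟩
  have h1 := hΦpos x; have h2 := hΦpos y
  have h3 := hΦle x; have h4 := hΦle y
  rw [abs_sub_le_iff]; constructor <;> linarith

lemma abs_le_var {Φ : Sig → ℝ} (hΦpos : ∀ x, 0 < Φ x) (hΦle : ∀ x, Φ x ≤ 1)
    {n : ℕ} {x y : Sig} (h : nClose n x y) : |Φ x - Φ y| ≤ Var Φ n :=
  le_csSup (var_bddAbove hΦpos hΦle n) ⟨x, y, h, rfl⟩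

lemma var_nonneg {Φ : Sig → ℝ} (hΦpos : ∀ x, 0 < Φ x) (hΦle : ∀ x, Φ x ≤ 1) (n : ℕ) :
    0 ≤ Var Φ n := by
  simpa [Var] using le_csSup (var_bddAbove hΦpos hΦle n)
    (⟨zpt, zpt, fun k _ => rfl, by simp⟩ :
      (0:ℝ) ∈ {d : ℝ | ∃ x y : Sig, nClose n x y ∧ d = |Φ x - Φ y|})

lemma var_tendsto {Φ : Sig → ℝ} (hΦpos : ∀ x, 0 < Φ x) (hΦle : ∀ x, Φ x ≤ 1)
    (hΦc : Continuous Φ) :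
    Tendsto (fun n => Var Φ n) atTop (𝓝 0) := by
  rw [Metric.tendsto_atTop]
  intro ε hε
  obtain ⟨N, hN⟩ := unifCont Φ hΦc (half_pos hε)
  refine ⟨N, fun m hm => ?_⟩
  have hle : Var Φ m ≤ ε/2 := by
    refine csSup_le ⟨0, zpt, zpt, fun k _ => rfl, by simp⟩ ?_
    rintro d ⟨x, y, hc, rfl⟩
    exact hN x y (nClose_mono hm hc)
  have h0 := var_nonneg hΦpos hΦle m
  rw [Real.dist_eq, abs_sub_lt_iff]
  constructor <;> linarith

end VarFacts

/-- Two configurations with the same (finite) initial block. -/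
def BRel (x y : Sig) : Prop :=
  x = y ∨ ∃ i : Fin 2, ∃ l : ℕ, 1 ≤ l ∧ (∀ k, k < l → x k = i ∧ y k = i) ∧ x l ≠ i ∧ y l ≠ i

lemma mem_cyl_pair (a b : Fin 2) (x : Sig) : x ∈ cyl [a, b] ↔ x 0 = a ∧ x 1 = b := by
  rw [mem_cyl_cons]
  constructor
  · rintro ⟨h0, h⟩; exact ⟨h0, h 0 (by simp)⟩
  · rintro ⟨h0, h1⟩
    refine ⟨h0, fun i hi => ?_⟩
    match i, hi with
    | 0, _ => simpa using h1

lemma mem_cyl_block (a i j : Fin 2) (m : ℕ) (x : Sig) :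
    x ∈ cyl (a :: (List.replicate m i ++ [j])) ↔
      x 0 = a ∧ (∀ k, k < m → x (k+1) = i) ∧ x (m+1) = j := by
  rw [mem_cyl_cons, mem_cyl_word]

section Constancy
variable {H : Sig → ℝ} {H0 H1 : ℕ → ℝ} {Φ : Sig → ℝ} {β lam : ℝ}

lemma H_cons_eq
    (hz : ∀ x ∈ cyl [0,0] ∪ cyl [1,1], H x = 0)
    (hv0 : ∀ n, 1 ≤ n → ∀ x ∈ cyl (0 :: (List.replicate n 1 ++ [0])), H x = H0 n)
    (hv1 : ∀ n, 1 ≤ n → ∀ x ∈ cyl (1 :: (List.replicate n 0 ++ [1])), H x = H1 n)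
    {x y : Sig} (h : BRel x y) (i : Fin 2) : H (cons2 i x) = H (cons2 i y) := by
  have hzero : ∀ z : Sig, z 0 = z 1 → H z = 0 := by
    intro z hz01
    apply hz
    rcases (by omega : z 0 = 0 ∨ z 0 = 1) with h0 | h0
    · exact Or.inl ((mem_cyl_pair 0 0 z).2 ⟨h0, hz01 ▸ h0⟩)
    · exact Or.inr ((mem_cyl_pair 1 1 z).2 ⟨h0, hz01 ▸ h0⟩)
  rcases h with rfl | ⟨i', l, hl, hblk, hxl, hyl⟩
  · rfl
  have hx0 : x 0 = i' := (hblk 0 (by omega)).1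
  have hy0 : y 0 = i' := (hblk 0 (by omega)).2
  by_cases hii : i = i'
  · rw [hzero (cons2 i x) (by simpa [hii] using hx0.symm),
      hzero (cons2 i y) (by simpa [hii] using hy0.symm)]
  · have hxl' : x l = i := by rw [eq_nt_of_ne hxl, ← eq_nt_of_ne hii]
    have hyl' : y l = i := by rw [eq_nt_of_ne hyl, ← eq_nt_of_ne hii]
    have hmemx : ∀ z : Sig, (∀ k, k < l → z k = i') → z l = i →
        cons2 i z ∈ cyl (i :: (List.replicate l i' ++ [i])) := by
      intro z h1 h2
      rw [mem_cyl_block]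
      exact ⟨rfl, fun k hk => h1 k hk, h2⟩
    rcases (by omega : i' = 0 ∨ i' = 1) with rfl | rfl
    · have hi1 : i = 1 := by omega
      subst hi1
      rw [hv1 l hl _ (hmemx x (fun k hk => (hblk k hk).1) hxl'),
        hv1 l hl _ (hmemx y (fun k hk => (hblk k hk).2) hyl')]
    · have hi0 : i = 0 := by omega
      subst hi0
      rw [hv0 l hl _ (hmemx x (fun k hk => (hblk k hk).1) hxl'),
        hv0 l hl _ (hmemx y (fun k hk => (hblk k hk).2) hyl')]

lemma BRel_cons {x y : Sig} (h : BRel x y) (i : Fin 2) : BRel (cons2 i x) (cons2 i y) := by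
  rcases h with rfl | ⟨i', l, hl, hblk, hxl, hyl⟩
  · exact Or.inl rfl
  by_cases hii : i = i'
  · subst hii
    refine Or.inr ⟨i, l + 1, by omega, fun k hk => ?_, by simpa using hxl, by simpa using hyl⟩
    match k with
    | 0 => exact ⟨rfl, rfl⟩
    | Nat.succ m => simpa using hblk m (by omega)
  · refine Or.inr ⟨i, 1, le_refl 1, fun k hk => ?_, ?_, ?_⟩
    · match k, hk with
      | 0, _ => exact ⟨rfl, rfl⟩
    · simpa [(hblk 0 (by omega)).1] using Ne.symm hii
    · simpa [(hblk 0 (by omega)).2] using Ne.symm hii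

lemma nClose_cons {k : ℕ} {x y : Sig} (h : nClose k x y) (i : Fin 2) :
    nClose (k+1) (cons2 i x) (cons2 i y) := by
  intro m hm
  match m with
  | 0 => rfl
  | Nat.succ p => simpa using h p (by omega)

lemma key_ineq
    (hz : ∀ x ∈ cyl [0,0] ∪ cyl [1,1], H x = 0)
    (hv0 : ∀ n, 1 ≤ n → ∀ x ∈ cyl (0 :: (List.replicate n 1 ++ [0])), H x = H0 n)
    (hv1 : ∀ n, 1 ≤ n → ∀ x ∈ cyl (1 :: (List.replicate n 0 ++ [1])), H x = H1 n)
    (hΦpos : ∀ x, 0 < Φ x) (hΦle : ∀ x, Φ x ≤ 1)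
    (hlam : 0 < lam) (heig : transfer β H Φ = fun x => lam * Φ x)
    {c : ℝ} (hc : 0 < c) (hcle : ∀ x, c ≤ Φ x) :
    ∀ m k (x y : Sig), BRel x y → nClose k x y →
      |Φ x - Φ y| ≤ Var Φ (m + k) / c * Φ x := by
  intro m
  induction m with
  | zero =>
    intro k x y hR hcl
    have h1 : |Φ x - Φ y| ≤ Var Φ k := abs_le_var hΦpos hΦle hcl
    have h2 : Var Φ k = Var Φ k / c * c := by field_simp
    calc |Φ x - Φ y| ≤ Var Φ k := h1
      _ = Var Φ k / c * c := h2
      _ ≤ Var Φ k / c * Φ x := by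
          apply mul_le_mul_of_nonneg_left (hcle x)
          exact div_nonneg (var_nonneg hΦpos hΦle k) hc.le
      _ = Var Φ (0 + k) / c * Φ x := by rw [Nat.zero_add]
  | succ m ih =>
    intro k x y hR hcl
    have e0 : H (cons2 0 x) = H (cons2 0 y) := H_cons_eq hz hv0 hv1 hR 0
    have e1 : H (cons2 1 x) = H (cons2 1 y) := H_cons_eq hz hv0 hv1 hR 1
    have hx := congrFun heig x
    have hy := congrFun heig y
    simp only [transfer] at hx hy
    rw [← e0, ← e1] at hy
    set a0 := Real.exp (-β * H (cons2 0 x)) with ha0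
    set a1 := Real.exp (-β * H (cons2 1 x)) with ha1
    have ha0p : 0 < a0 := Real.exp_pos _
    have ha1p : 0 < a1 := Real.exp_pos _
    set D := Var Φ (m + 1 + k) / c with hD
    have hD0 : 0 ≤ D := div_nonneg (var_nonneg hΦpos hΦle _) hc.le
    have ih0 : |Φ (cons2 0 x) - Φ (cons2 0 y)| ≤ D * Φ (cons2 0 x) := by
      have := ih (k+1) _ _ (BRel_cons hR 0) (nClose_cons hcl 0)
      rwa [show m + (k + 1) = m + 1 + k by omega] at this
    have ih1 : |Φ (cons2 1 x) - Φ (cons2 1 y)| ≤ D * Φ (cons2 1 x) := by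
      have := ih (k+1) _ _ (BRel_cons hR 1) (nClose_cons hcl 1)
      rwa [show m + (k + 1) = m + 1 + k by omega] at this
    have key : lam * |Φ x - Φ y| ≤ D * (lam * Φ x) := by
      have hdiff : lam * (Φ x - Φ y)
          = a0 * (Φ (cons2 0 x) - Φ (cons2 0 y)) + a1 * (Φ (cons2 1 x) - Φ (cons2 1 y)) := by
        rw [mul_sub, ← hx, ← hy]; ring
      calc lam * |Φ x - Φ y| = |lam * (Φ x - Φ y)| := by
            rw [abs_mul, abs_of_pos hlam]
        _ ≤ a0 * |Φ (cons2 0 x) - Φ (cons2 0 y)| + a1 * |Φ (cons2 1 x) - Φ (cons2 1 y)| := by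
            rw [hdiff]
            refine (abs_add_le _ _).trans ?_
            rw [abs_mul, abs_mul, abs_of_pos ha0p, abs_of_pos ha1p]
        _ ≤ a0 * (D * Φ (cons2 0 x)) + a1 * (D * Φ (cons2 1 x)) := by
            gcongr
        _ = D * (a0 * Φ (cons2 0 x) + a1 * Φ (cons2 1 x)) := by ring
        _ = D * (lam * Φ x) := by rw [hx]
    have := (mul_le_mul_iff_of_pos_left hlam).1 (by linarith [key] : lam * |Φ x - Φ y| ≤ lam * (D * Φ x))
    exact this

lemma Phi_const_on_BRel
    (hz : ∀ x ∈ cyl [0,0] ∪ cyl [1,1], H x = 0)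
    (hv0 : ∀ n, 1 ≤ n → ∀ x ∈ cyl (0 :: (List.replicate n 1 ++ [0])), H x = H0 n)
    (hv1 : ∀ n, 1 ≤ n → ∀ x ∈ cyl (1 :: (List.replicate n 0 ++ [1])), H x = H1 n)
    (hΦc : Continuous Φ) (hΦpos : ∀ x, 0 < Φ x) (hΦle : ∀ x, Φ x ≤ 1)
    (hlam : 0 < lam) (heig : transfer β H Φ = fun x => lam * Φ x)
    {x y : Sig} (h : BRel x y) : Φ x = Φ y := by
  obtain ⟨xm, -, hxm⟩ := isCompact_univ.exists_isMinOn ⟨zpt, Set.mem_univ zpt⟩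
    hΦc.continuousOn
  set c := Φ xm with hcdef
  have hc : 0 < c := hΦpos xm
  have hcle : ∀ z, c ≤ Φ z := fun z => hxm (Set.mem_univ z)
  have hm : ∀ m : ℕ, |Φ x - Φ y| ≤ Var Φ m / c * Φ x := by
    intro m
    have := key_ineq hz hv0 hv1 hΦpos hΦle hlam heig hc hcle m 0 x y h (fun k hk => by omega)
    simpa using this
  have ht : Tendsto (fun m => Var Φ m / c * Φ x) atTop (𝓝 0) := by
    have h2 := (var_tendsto hΦpos hΦle hΦc).mul_const (c⁻¹ * Φ x)
    rw [zero_mul] at h2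
    exact h2.congr fun m => by ring
  have hle : |Φ x - Φ y| ≤ 0 := ge_of_tendsto' ht hm
  have := abs_nonpos_iff.1 hle
  linarith [abs_nonneg (Φ x - Φ y), sub_eq_zero.1 this]

end Constancy

section Formula
variable {H : Sig → ℝ} {Φ : Sig → ℝ} {β lam : ℝ}

lemma heq_i (heig : transfer β H Φ = fun x => lam * Φ x) (i : Fin 2) (z : Sig) :
    Real.exp (-β * H (cons2 i z)) * Φ (cons2 i z)
      + Real.exp (-β * H (cons2 (nt i) z)) * Φ (cons2 (nt i) z) = lam * Φ z := by
  have h := congrFun heig z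
  simp only [transfer] at h
  rcases (by omega : i = 0 ∨ i = 1) with rfl | rfl
  · simpa [nt] using h
  · show Real.exp (-β * H (cons2 1 z)) * Φ (cons2 1 z)
      + Real.exp (-β * H (cons2 (nt 1) z)) * Φ (cons2 (nt 1) z) = lam * Φ z
    have hnt : nt 1 = 0 := rfl
    rw [hnt]
    linarith [h]

lemma formula_gen
    (hΦpos : ∀ x, 0 < Φ x) (hΦle : ∀ x, Φ x ≤ 1)
    (hβ : 0 < β) (hlam1 : 1 < lam)
    (heig : transfer β H Φ = fun x => lam * Φ x)
    (i : Fin 2) (Hs : ℕ → ℝ) (hHs : ∀ m, 1 ≤ m → 0 ≤ Hs m)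
    (hz : ∀ x : Sig, x 0 = i → H (cons2 i x) = 0)
    (hv : ∀ m, 1 ≤ m → ∀ x : Sig, (∀ k, k < m → x k = i) → x m ≠ i →
      H (cons2 (nt i) x) = Hs m)
    (hcA : ∀ x : Sig, x 0 = i → Φ (cons2 (nt i) x) = Φ (cons2 (nt i) (fun _ => i)))
    (n : ℕ) (hn : 1 ≤ n) (x : Sig) (hx0 : ∀ k, k < n → x k = i) (hxn : x n ≠ i) :
    Φ x = (∑' j : ℕ, (lam ^ (j + 1))⁻¹ * Real.exp (-β * Hs (n + j)))
      * Φ (cons2 (nt i) (fun _ => i)) := by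
  have hlam : 0 < lam := lt_trans one_pos hlam1
  set A := Φ (cons2 (nt i) (fun _ => i)) with hA
  set z : ℕ → Sig := fun j => (cons2 i)^[j] x with hzdef
  have hz0 : z 0 = x := rfl
  have hzsucc : ∀ j, z (j+1) = cons2 i (z j) := fun j => Function.iterate_succ_apply' _ _ _
  have hcoord : ∀ j, (∀ k, k < n + j → z j k = i) ∧ z j (n + j) ≠ i := by
    intro j
    induction j with
    | zero => exact ⟨fun k hk => hx0 k (by omega), by simpa [hz0] using hxn⟩
    | succ j ih =>
      rw [hzsucc j]
      constructor
      · intro k hk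
        match k with
        | 0 => rfl
        | Nat.succ p => exact (by simpa using ih.1 p (by omega))
      · show cons2 i (z j) (n + j + 1) ≠ i
        simpa using ih.2
  set f : ℕ → ℝ := fun j => (lam ^ (j + 1))⁻¹ * Real.exp (-β * Hs (n + j)) with hf
  have hrec : ∀ j, Φ (z j) = lam⁻¹ * Φ (z (j+1)) + lam⁻¹ * Real.exp (-β * Hs (n + j)) * A := by
    intro j
    have h := heq_i heig i (z j)
    have e1 : H (cons2 i (z j)) = 0 := hz (z j) ((hcoord j).1 0 (by omega))
    have e2 : H (cons2 (nt i) (z j)) = Hs (n + j) :=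
      hv (n + j) (by omega) (z j) (hcoord j).1 (hcoord j).2
    have e3 : Φ (cons2 (nt i) (z j)) = A := hcA (z j) ((hcoord j).1 0 (by omega))
    rw [e1, e2, e3, ← hzsucc j] at h
    simp only [mul_zero, neg_zero, Real.exp_zero, one_mul] at h
    set E := Real.exp (-β * Hs (n + j)) with hE
    field_simp
    linarith [h]
  have hpartial : ∀ m, Φ x = (lam ^ m)⁻¹ * Φ (z m) + (∑ j ∈ Finset.range m, f j) * A := by
    intro m
    induction m with
    | zero => simp [hz0]
    | succ m ih =>
      calc Φ x = (lam ^ m)⁻¹ * Φ (z m) + (∑ j ∈ Finset.range m, f j) * A := ih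
        _ = (lam ^ (m+1))⁻¹ * Φ (z (m+1)) + (∑ j ∈ Finset.range (m+1), f j) * A := by
            rw [hrec m, Finset.sum_range_succ]
            simp only [hf]
            field_simp
            ring
  have hinvlt : lam⁻¹ < 1 := inv_lt_one_of_one_lt₀ hlam1
  have hinvnn : (0:ℝ) ≤ lam⁻¹ := by positivity
  have hfle : ∀ j, f j ≤ lam⁻¹ ^ j := by
    intro j
    have he1 : Real.exp (-β * Hs (n + j)) ≤ 1 := by
      rw [Real.exp_le_one_iff]
      have := hHs (n + j) (by omega)
      nlinarith
    calc f j = (lam⁻¹) ^ (j+1) * Real.exp (-β * Hs (n + j)) := by rw [hf]; rw [inv_pow]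
      _ ≤ (lam⁻¹) ^ (j+1) * 1 := by
          apply mul_le_mul_of_nonneg_left he1 (pow_nonneg hinvnn _)
      _ ≤ lam⁻¹ ^ j := by
          rw [mul_one, pow_succ]
          nlinarith [pow_nonneg hinvnn j, pow_le_one₀ hinvnn hinvlt.le (n := j)]
  have hfnn : ∀ j, 0 ≤ f j := fun j => mul_nonneg (inv_nonneg.2 (pow_nonneg hlam.le _)) (Real.exp_pos _).le
  have hsum : Summable f :=
    Summable.of_nonneg_of_le hfnn hfle (summable_geometric_of_lt_one hinvnn hinvlt)
  have T1 : Tendsto (fun m => (lam ^ m)⁻¹ * Φ (z m)) atTop (𝓝 0) := by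
    apply squeeze_zero (fun m => mul_nonneg (inv_nonneg.2 (pow_nonneg hlam.le _)) (hΦpos _).le) (g := fun m => lam⁻¹ ^ m)
    · intro m
      rw [← inv_pow]
      calc lam⁻¹ ^ m * Φ (z m) ≤ lam⁻¹ ^ m * 1 :=
            mul_le_mul_of_nonneg_left (hΦle _) (pow_nonneg hinvnn _)
        _ = lam⁻¹ ^ m := mul_one _
    · exact tendsto_pow_atTop_nhds_zero_of_lt_one hinvnn hinvlt
  have T2 : Tendsto (fun m => (∑ j ∈ Finset.range m, f j) * A) atTop (𝓝 ((∑' j, f j) * A)) :=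
    hsum.hasSum.tendsto_sum_nat.mul_const A
  have Ttot : Tendsto (fun _ : ℕ => Φ x) atTop (𝓝 (0 + (∑' j, f j) * A)) :=
    (T1.add T2).congr fun m => (hpartial m).symm
  have := tendsto_nhds_unique tendsto_const_nhds Ttot
  rw [this, zero_add]

lemma fixed_gen
    (hΦpos : ∀ x, 0 < Φ x) (hlam1 : 1 < lam)
    (heig : transfer β H Φ = fun x => lam * Φ x)
    (hHc : Continuous H)
    (i : Fin 2) (Hs : ℕ → ℝ)
    (hz : ∀ x : Sig, x 0 = i → H (cons2 i x) = 0)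
    (hv : ∀ m, 1 ≤ m → ∀ x : Sig, (∀ k, k < m → x k = i) → x m ≠ i →
      H (cons2 (nt i) x) = Hs m)
    (Hinf : ℝ) (hinf : Tendsto Hs atTop (𝓝 Hinf)) :
    Φ (fun _ => i) = Real.exp (-β * Hinf) / (lam - 1) * Φ (cons2 (nt i) (fun _ => i)) := by
  set e : Sig := fun _ => i with he
  have hce : cons2 i e = e := by
    funext k
    match k with
    | 0 => rfl
    | Nat.succ p => rfl
  -- the limit identity  H (cons2 (nt i) e) = Hinf
  have hHlim : H (cons2 (nt i) e) = Hinf := by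
    set p : ℕ → Sig := fun m => cons2 (nt i) (fun k => if k < m then i else nt i) with hp
    have hHp : ∀ m, 1 ≤ m → H (p m) = Hs m := by
      intro m hm
      apply hv m hm
      · intro k hk; simp [hk]
      · simp [nt_ne i]
    have hptend : Tendsto p atTop (𝓝 (cons2 (nt i) e)) := by
      rw [tendsto_pi_nhds]
      intro k
      apply Tendsto.congr' _ (tendsto_const_nhds (x := cons2 (nt i) e k))
      rw [Filter.eventuallyEq_iff_exists_mem]
      refine ⟨Set.Ici (k+1), Filter.mem_atTop _, fun m hm => ?_⟩
      have hm' : k + 1 ≤ m := hm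
      match k with
      | 0 => rfl
      | Nat.succ q =>
        show cons2 (nt i) e (q+1) = p m (q+1)
        simp only [hp, cons2_succ, he]
        rw [if_pos (by omega)]
    have L1 : Tendsto (fun m => H (p m)) atTop (𝓝 (H (cons2 (nt i) e))) :=
      (hHc.tendsto _).comp hptend
    have L2 : Tendsto (fun m => H (p m)) atTop (𝓝 Hinf) := by
      apply hinf.congr'
      rw [Filter.eventuallyEq_iff_exists_mem]
      exact ⟨Set.Ici 1, Filter.mem_atTop _, fun m hm => (hHp m hm).symm⟩
    exact tendsto_nhds_unique L1 L2
  have h := heq_i heig i e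
  rw [hz e rfl, hce, hHlim] at h
  simp only [mul_zero, neg_zero, Real.exp_zero, one_mul] at h
  have hne : lam - 1 ≠ 0 := sub_ne_zero.2 (ne_of_gt hlam1)
  rw [div_mul_eq_mul_div, eq_div_iff hne]
  linear_combination -h

end Formula

@[simp] lemma nt_zero : nt 0 = 1 := rfl
@[simp] lemma nt_one : nt 1 = 0 := rfl


/-- `1 < λ_β ≤ 2`, and explicit formulas for the eigenfunction `Φ_β` on the
cylinders `[0^n 1]`, `[1^n 0]` and at the fixed points, for a reduced double-well type
potential. -/
theorem stmt_10 (H : Sig → ℝ) (H0 H1 : ℕ → ℝ) (hR : ReducedDW H H0 H1)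
    (Hinf0 Hinf1 : ℝ)
    (hinf0 : Tendsto H0 atTop (𝓝 Hinf0)) (hinf1 : Tendsto H1 atTop (𝓝 Hinf1))
    (β : ℝ) (hβ : 0 < β) (Φ : Sig → ℝ) (lam : ℝ)
    (hΦc : Continuous Φ) (hΦpos : ∀ x, 0 < Φ x) (hΦmax : IsGreatest (Set.range Φ) 1)
    (hlam : 0 < lam) (heig : transfer β H Φ = fun x => lam * Φ x) :
    (1 < lam ∧ lam ≤ 2) ∧
    (∀ n : ℕ, 1 ≤ n → ∀ x ∈ cyl (List.replicate n 0 ++ [1]),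
      Φ x = (∑' j : ℕ, (lam ^ (j + 1))⁻¹ * Real.exp (-β * H1 (n + j))) * Φ (cons2 1 zpt)) ∧
    Φ zpt = Real.exp (-β * Hinf1) / (lam - 1) * Φ (cons2 1 zpt) ∧
    (∀ n : ℕ, 1 ≤ n → ∀ x ∈ cyl (List.replicate n 1 ++ [0]),
      Φ x = (∑' j : ℕ, (lam ^ (j + 1))⁻¹ * Real.exp (-β * H0 (n + j))) * Φ (cons2 0 opt)) ∧
    Φ opt = Real.exp (-β * Hinf0) / (lam - 1) * Φ (cons2 0 opt) ∧
    (Hinf0 = 0 → Hinf1 = 0 → max (Φ zpt) (Φ opt) = 1) := by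
  have hΦle : ∀ x, Φ x ≤ 1 := fun x => hΦmax.2 ⟨x, rfl⟩
  -- H (i x) = 0 when x starts with i
  have hzi : ∀ (i : Fin 2) (x : Sig), x 0 = i → H (cons2 i x) = 0 := by
    intro i x hx
    apply hR.zero
    rcases (by omega : i = 0 ∨ i = 1) with rfl | rfl
    · exact Or.inl ((mem_cyl_pair 0 0 _).2 ⟨rfl, by simpa using hx⟩)
    · exact Or.inr ((mem_cyl_pair 1 1 _).2 ⟨rfl, by simpa using hx⟩)
  -- 1 < lam
  have hczpt : cons2 0 zpt = zpt := by
    funext k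
    match k with
    | 0 => rfl
    | Nat.succ p => rfl
  have hlam1 : 1 < lam := by
    have h := heq_i heig 0 zpt
    rw [hzi 0 zpt rfl, hczpt] at h
    simp only [mul_zero, neg_zero, Real.exp_zero, one_mul, nt_zero] at h
    have hpos : 0 < Real.exp (-β * H (cons2 1 zpt)) * Φ (cons2 1 zpt) :=
      mul_pos (Real.exp_pos _) (hΦpos _)
    nlinarith [hΦpos zpt]
  -- lam ≤ 2
  have hlam2 : lam ≤ 2 := by
    obtain ⟨xs, hxs⟩ := hΦmax.1
    have h := congrFun heig xs
    simp only [transfer] at h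
    have hb : ∀ i : Fin 2, Real.exp (-β * H (cons2 i xs)) * Φ (cons2 i xs) ≤ 1 := by
      intro i
      have he1 : Real.exp (-β * H (cons2 i xs)) ≤ 1 := by
        rw [Real.exp_le_one_iff]
        nlinarith [hR.nonneg (cons2 i xs)]
      calc Real.exp (-β * H (cons2 i xs)) * Φ (cons2 i xs)
          ≤ Real.exp (-β * H (cons2 i xs)) :=
            mul_le_of_le_one_right (Real.exp_pos _).le (hΦle _)
        _ ≤ 1 := he1
    have h0 := hb 0
    have h1 := hb 1
    rw [hxs, mul_one] at h
    linarith
  have hne : lam - 1 ≠ 0 := sub_ne_zero.2 (ne_of_gt hlam1)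
  have hinvnn : (0:ℝ) ≤ lam⁻¹ := by positivity
  have hinvlt : lam⁻¹ < 1 := inv_lt_one_of_one_lt₀ hlam1
  -- theValues of H on the relevant cylinders, in i-form
  have hv0' : ∀ m, 1 ≤ m → ∀ x : Sig, (∀ k, k < m → x k = (0 : Fin 2)) → x m ≠ 0 →
      H (cons2 (nt 0) x) = H1 m := by
    intro m hm x h1 h2
    have hx : cons2 1 x ∈ cyl (1 :: (List.replicate m 0 ++ [1])) := by
      rw [mem_cyl_block]
      refine ⟨rfl, fun k hk => by simpa using h1 k hk, ?_⟩
      have := eq_nt_of_ne h2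
      simpa [nt] using this
    simpa using hR.val1 m hm _ hx
  have hv1' : ∀ m, 1 ≤ m → ∀ x : Sig, (∀ k, k < m → x k = (1 : Fin 2)) → x m ≠ 1 →
      H (cons2 (nt 1) x) = H0 m := by
    intro m hm x h1 h2
    have hx : cons2 0 x ∈ cyl (0 :: (List.replicate m 1 ++ [0])) := by
      rw [mem_cyl_block]
      refine ⟨rfl, fun k hk => by simpa using h1 k hk, ?_⟩
      have := eq_nt_of_ne h2
      simpa [nt] using this
    simpa using hR.val0 m hm _ hx
  -- constancy
  have hcAi : ∀ (i : Fin 2) (x : Sig), x 0 = i →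
      Φ (cons2 (nt i) x) = Φ (cons2 (nt i) (fun _ => i)) := by
    intro i x hx
    apply Phi_const_on_BRel hR.zero hR.val0 hR.val1 hΦc hΦpos hΦle hlam heig
    refine Or.inr ⟨nt i, 1, le_refl 1, ?_, ?_, ?_⟩
    · intro k hk
      match k, hk with
      | 0, _ => exact ⟨rfl, rfl⟩
    · show cons2 (nt i) x 1 ≠ nt i
      rw [cons2_succ, hx]
      exact Ne.symm (nt_ne i)
    · show cons2 (nt i) (fun _ => i) 1 ≠ nt i
      exact Ne.symm (nt_ne i)
  -- the four formulas
  have F1 : ∀ n : ℕ, 1 ≤ n → ∀ x ∈ cyl (List.replicate n 0 ++ [1]),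
      Φ x = (∑' j : ℕ, (lam ^ (j + 1))⁻¹ * Real.exp (-β * H1 (n + j))) * Φ (cons2 1 zpt) := by
    intro n hn x hx
    obtain ⟨h1, h2⟩ := (mem_cyl_word 0 1 n x).1 hx
    have h2' : x n ≠ 0 := by rw [h2]; decide
    have := formula_gen hΦpos hΦle hβ hlam1 heig 0 H1
      (fun m hm => (hR.pos1 m hm).le) (hzi 0) hv0' (hcAi 0) n hn x h1 h2'
    exact this
  have F0 : ∀ n : ℕ, 1 ≤ n → ∀ x ∈ cyl (List.replicate n 1 ++ [0]),
      Φ x = (∑' j : ℕ, (lam ^ (j + 1))⁻¹ * Real.exp (-β * H0 (n + j))) * Φ (cons2 0 opt) := by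
    intro n hn x hx
    obtain ⟨h1, h2⟩ := (mem_cyl_word 1 0 n x).1 hx
    have h2' : x n ≠ 1 := by rw [h2]; decide
    have := formula_gen hΦpos hΦle hβ hlam1 heig 1 H0
      (fun m hm => (hR.pos0 m hm).le) (hzi 1) hv1' (hcAi 1) n hn x h1 h2'
    exact this
  have Fz : Φ zpt = Real.exp (-β * Hinf1) / (lam - 1) * Φ (cons2 1 zpt) := by
    have := fixed_gen hΦpos hlam1 heig hR.cont 0 H1 (hzi 0) hv0' Hinf1 hinf1
    exact this
  have Fo : Φ opt = Real.exp (-β * Hinf0) / (lam - 1) * Φ (cons2 0 opt) := by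
    have := fixed_gen hΦpos hlam1 heig hR.cont 1 H0 (hzi 1) hv1' Hinf0 hinf0
    exact this
  refine ⟨⟨hlam1, hlam2⟩, F1, Fz, F0, Fo, ?_⟩
  -- statement (3)
  intro h0 h1
  have hub0 : Φ zpt ≤ 1 := hΦle zpt
  have hub1 : Φ opt ≤ 1 := hΦle opt
  have hsgeo : Summable (fun j : ℕ => (lam ^ (j + 1))⁻¹) := by
    apply ((summable_geometric_of_lt_one hinvnn hinvlt).mul_left lam⁻¹).congr
    intro j
    rw [← inv_pow, pow_succ]
    ring
  have hgeo : (∑' j : ℕ, (lam ^ (j + 1))⁻¹) = 1 / (lam - 1) := by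
    have hc : ∀ j : ℕ, (lam ^ (j + 1))⁻¹ = lam⁻¹ * (lam⁻¹) ^ j := by
      intro j
      rw [← inv_pow, pow_succ]
      ring
    rw [tsum_congr hc, tsum_mul_left, tsum_geometric_of_lt_one hinvnn hinvlt, eq_div_iff hne]
    have hlne : lam ≠ 0 := ne_of_gt hlam
    have h1l : (1 : ℝ) - lam⁻¹ ≠ 0 := by
      intro hcon
      have : lam⁻¹ = 1 := by linarith
      rw [this] at hinvlt
      linarith
    field_simp
  obtain ⟨xs, hxs⟩ := hΦmax.1
  by_cases hconst : ∀ k, xs k = xs 0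
  · have hxconst : xs = fun _ => xs 0 := funext hconst
    rcases (by omega : xs 0 = 0 ∨ xs 0 = 1) with he | he
    · have hz' : Φ zpt = 1 := by
        rw [show zpt = xs by rw [hxconst, he]; rfl]
        exact hxs
      rw [hz']
      exact max_eq_left hub1
    · have hz' : Φ opt = 1 := by
        rw [show opt = xs by rw [hxconst, he]; rfl]
        exact hxs
      rw [hz']
      exact max_eq_right hub0
  · push_neg at hconst
    have hspec : xs (Nat.find hconst) ≠ xs 0 := Nat.find_spec hconst
    set n := Nat.find hconst with hn
    have hmin : ∀ k, k < n → xs k = xs 0 := fun k hk => not_not.1 (Nat.find_min hconst hk)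
    have hn1 : 1 ≤ n := by
      rcases Nat.eq_zero_or_pos n with hz' | hz'
      · rw [hz'] at hspec; exact absurd rfl hspec
      · exact hz'
    rcases (by omega : xs 0 = 0 ∨ xs 0 = 1) with he | he
    · -- xs in [0^n 1]
      have hxn : xs n = 1 := by
        rw [he] at hspec
        simpa using eq_nt_of_ne hspec
      have hmem : xs ∈ cyl (List.replicate n 0 ++ [1]) :=
        (mem_cyl_word 0 1 n xs).2 ⟨fun k hk => (hmin k hk).trans he, hxn⟩
      have hform := F1 n hn1 xs hmem
      set A := Φ (cons2 1 zpt) with hA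
      have hApos : 0 < A := hΦpos _
      set F := ∑' j : ℕ, (lam ^ (j + 1))⁻¹ * Real.exp (-β * H1 (n + j)) with hF
      have hFA : F * A = 1 := by rw [← hform, hxs]
      have hsumF : Summable (fun j : ℕ => (lam ^ (j + 1))⁻¹ * Real.exp (-β * H1 (n + j))) := by
        apply Summable.of_nonneg_of_le
          (fun j => mul_nonneg (inv_nonneg.2 (pow_nonneg hlam.le _)) (Real.exp_pos _).le)
          (fun j => ?_) hsgeo
        apply mul_le_of_le_one_right (inv_nonneg.2 (pow_nonneg hlam.le _))
        rw [Real.exp_le_one_iff]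
        nlinarith [(hR.pos1 (n + j) (by omega)).le]
      have hFle : F ≤ 1 / (lam - 1) := by
        rw [← hgeo, hF]
        apply Summable.tsum_le_tsum _ hsumF hsgeo
        intro j
        apply mul_le_of_le_one_right (inv_nonneg.2 (pow_nonneg hlam.le _))
        rw [Real.exp_le_one_iff]
        nlinarith [(hR.pos1 (n + j) (by omega)).le]
      have hΦz : Φ zpt = 1 / (lam - 1) * A := by
        rw [Fz, h1]
        norm_num
      have hge : (1:ℝ) ≤ Φ zpt := by
        rw [hΦz]
        calc (1:ℝ) = F * A := hFA.symm
          _ ≤ 1 / (lam - 1) * A := mul_le_mul_of_nonneg_right hFle hApos.le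
      rw [le_antisymm hub0 hge]
      exact max_eq_left hub1
    · -- xs in [1^n 0]
      have hxn : xs n = 0 := by
        rw [he] at hspec
        simpa using eq_nt_of_ne hspec
      have hmem : xs ∈ cyl (List.replicate n 1 ++ [0]) :=
        (mem_cyl_word 1 0 n xs).2 ⟨fun k hk => (hmin k hk).trans he, hxn⟩
      have hform := F0 n hn1 xs hmem
      set A := Φ (cons2 0 opt) with hA
      have hApos : 0 < A := hΦpos _
      set F := ∑' j : ℕ, (lam ^ (j + 1))⁻¹ * Real.exp (-β * H0 (n + j)) with hF
      have hFA : F * A = 1 := by rw [← hform, hxs]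
      have hsumF : Summable (fun j : ℕ => (lam ^ (j + 1))⁻¹ * Real.exp (-β * H0 (n + j))) := by
        apply Summable.of_nonneg_of_le
          (fun j => mul_nonneg (inv_nonneg.2 (pow_nonneg hlam.le _)) (Real.exp_pos _).le)
          (fun j => ?_) hsgeo
        apply mul_le_of_le_one_right (inv_nonneg.2 (pow_nonneg hlam.le _))
        rw [Real.exp_le_one_iff]
        nlinarith [(hR.pos0 (n + j) (by omega)).le]
      have hFle : F ≤ 1 / (lam - 1) := by
        rw [← hgeo, hF]
        apply Summable.tsum_le_tsum _ hsumF hsgeo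
        intro j
        apply mul_le_of_le_one_right (inv_nonneg.2 (pow_nonneg hlam.le _))
        rw [Real.exp_le_one_iff]
        nlinarith [(hR.pos0 (n + j) (by omega)).le]
      have hΦo : Φ opt = 1 / (lam - 1) * A := by
        rw [Fo, h0]
        norm_num
      have hge : (1:ℝ) ≤ Φ opt := by
        rw [hΦo]
        calc (1:ℝ) = F * A := hFA.symm
          _ ≤ 1 / (lam - 1) * A := mul_le_mul_of_nonneg_right hFle hApos.le
      rw [le_antisymm hub1 hge]
      exact max_eq_right hub0
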